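/- arXiv:2411.05512 — 5 statements merged into one kernel-verified Lean document; each statement's English description precedes it below -/
import Mathlib

section
/- Let X and Y be real-valued random variables on a probability space with X², Y², and X·Y integrable, and suppose σ_X² = Var(X) > 0 and σ_Y² = Var(Y) > 0. Let a, b be real constants and set φ_X = (E[X]−a)/σ_X, φ_Y = (E[Y]−b)/σ_Y, and ρ = Cov(X,Y)/(σ_X·σ_Y). Then E[(X−a)(Y−b)] / (√(E[(X−a)²])·√(E[(Y−b)²])) = (ρ + φ_X·φ_Y) / (√(1+φ_X²)·√(1+φ_Y²)). -/
open MeasureTheory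

/-- Expectation of a real random variable. -/
noncomputable def expVal {Ω : Type*} [MeasurableSpace Ω] (μ : Measure Ω) (X : Ω → ℝ) : ℝ :=
  ∫ ω, X ω ∂μ

/-- Covariance `Cov(X,Y) = E[(X − E[X])(Y − E[Y])]`. -/
noncomputable def covVal {Ω : Type*} [MeasurableSpace Ω] (μ : Measure Ω) (X Y : Ω → ℝ) : ℝ :=
  ∫ ω, (X ω - expVal μ X) * (Y ω - expVal μ Y) ∂μ

/-- Variance `Var(X) = E[(X − E[X])²]`. -/
noncomputable def varVal {Ω : Type*} [MeasurableSpace Ω] (μ : Measure Ω) (X : Ω → ℝ) : ℝ :=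
  ∫ ω, (X ω - expVal μ X) ^ 2 ∂μ

/-- The normalized form of the Bairamov–Kotz bivariate local dependence function:
for square-integrable `X`, `Y` with `X·Y` integrable, positive variances, and any constants
`a`, `b`, with `φ_X = (E[X]−a)/σ_X`, `φ_Y = (E[Y]−b)/σ_Y`, `ρ = Cov(X,Y)/(σ_X σ_Y)`,
`E[(X−a)(Y−b)] / (√E[(X−a)²]·√E[(Y−b)²]) = (ρ + φ_X φ_Y)/(√(1+φ_X²)·√(1+φ_Y²))`. -/
theorem localDependence_normalized_form {Ω : Type*} [MeasurableSpace Ω]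
    (μ : Measure Ω) [IsProbabilityMeasure μ] (X Y : Ω → ℝ)
    (hX : MemLp X 2 μ) (hY : MemLp Y 2 μ)
    (hXY : Integrable (fun ω => X ω * Y ω) μ)
    (hVarX : 0 < varVal μ X) (hVarY : 0 < varVal μ Y)
    (a b : ℝ) (σX σY φX φY ρ : ℝ)
    (hσX : σX = Real.sqrt (varVal μ X)) (hσY : σY = Real.sqrt (varVal μ Y))
    (hφX : φX = (expVal μ X - a) / σX) (hφY : φY = (expVal μ Y - b) / σY)
    (hρ : ρ = covVal μ X Y / (σX * σY)) :
    (∫ ω, (X ω - a) * (Y ω - b) ∂μ) /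
        (Real.sqrt (∫ ω, (X ω - a) ^ 2 ∂μ) * Real.sqrt (∫ ω, (Y ω - b) ^ 2 ∂μ)) =
      (ρ + φX * φY) / (Real.sqrt (1 + φX ^ 2) * Real.sqrt (1 + φY ^ 2)) := by
  have hXi : Integrable X μ := hX.integrable one_le_two
  have hYi : Integrable Y μ := hY.integrable one_le_two
  have hX2 : Integrable (fun ω => X ω ^ 2) μ := by
    simpa [sq] using hX.integrable_sq
  have hY2 : Integrable (fun ω => Y ω ^ 2) μ := by
    simpa [sq] using hY.integrable_sq
  set mX := expVal μ X with hmX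
  set mY := expVal μ Y with hmY
  -- general expansions
  have key : ∀ c d : ℝ, ∫ ω, (X ω - c) * (Y ω - d) ∂μ =
      (∫ ω, X ω * Y ω ∂μ) - d * (∫ ω, X ω ∂μ) - c * (∫ ω, Y ω ∂μ) + c * d := by
    intro c d
    have h1 : Integrable (fun ω => X ω * Y ω - d * X ω) μ := hXY.sub (hXi.const_mul d)
    have h2 : Integrable (fun ω => X ω * Y ω - d * X ω - c * Y ω) μ := h1.sub (hYi.const_mul c)
    have hrw : (fun ω => (X ω - c) * (Y ω - d)) =
        fun ω => (X ω * Y ω - d * X ω - c * Y ω) + c * d := by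
      funext ω; ring
    rw [hrw, integral_add h2 (integrable_const _), integral_sub h1 (hYi.const_mul c),
      integral_sub hXY (hXi.const_mul d), integral_const_mul, integral_const_mul,
      integral_const]
    simp
  have key2 : ∀ (Z : Ω → ℝ), Integrable Z μ → Integrable (fun ω => Z ω ^ 2) μ → ∀ c : ℝ,
      ∫ ω, (Z ω - c) ^ 2 ∂μ = (∫ ω, Z ω ^ 2 ∂μ) - 2 * c * (∫ ω, Z ω ∂μ) + c ^ 2 := by
    intro Z hZi hZ2 c
    have h1 : Integrable (fun ω => Z ω ^ 2 - 2 * c * Z ω) μ := hZ2.sub (hZi.const_mul _)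
    have hrw : (fun ω => (Z ω - c) ^ 2) = fun ω => (Z ω ^ 2 - 2 * c * Z ω) + c ^ 2 := by
      funext ω; ring
    rw [hrw, integral_add h1 (integrable_const _), integral_sub hZ2 (hZi.const_mul _),
      integral_const_mul, integral_const]
    simp
  have hmX' : (∫ ω, X ω ∂μ) = mX := rfl
  have hmY' : (∫ ω, Y ω ∂μ) = mY := rfl
  set C := covVal μ X Y with hC
  set VX := varVal μ X with hVX
  set VY := varVal μ Y with hVY
  have hCov : C = (∫ ω, X ω * Y ω ∂μ) - mX * mY := by
    rw [hC, covVal, key mX mY, hmX', hmY']; ring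
  have hVarX' : VX = (∫ ω, X ω ^ 2 ∂μ) - mX ^ 2 := by
    rw [hVX, varVal, key2 X hXi hX2 mX, hmX']; ring
  have hVarY' : VY = (∫ ω, Y ω ^ 2 ∂μ) - mY ^ 2 := by
    rw [hVY, varVal, key2 Y hYi hY2 mY, hmY']; ring
  have hnum : ∫ ω, (X ω - a) * (Y ω - b) ∂μ = C + (mX - a) * (mY - b) := by
    rw [key a b, hCov, hmX', hmY']; ring
  have hdX : ∫ ω, (X ω - a) ^ 2 ∂μ = VX + (mX - a) ^ 2 := by
    rw [key2 X hXi hX2 a, hVarX', hmX']; ring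
  have hdY : ∫ ω, (Y ω - b) ^ 2 ∂μ = VY + (mY - b) ^ 2 := by
    rw [key2 Y hYi hY2 b, hVarY', hmY']; ring
  have hσXpos : 0 < σX := hσX ▸ Real.sqrt_pos.2 hVarX
  have hσYpos : 0 < σY := hσY ▸ Real.sqrt_pos.2 hVarY
  have hσX2 : σX ^ 2 = VX := by rw [hσX, Real.sq_sqrt hVarX.le]
  have hσY2 : σY ^ 2 = VY := by rw [hσY, Real.sq_sqrt hVarY.le]
  have hsX : Real.sqrt (1 + φX ^ 2) = Real.sqrt (VX + (mX - a) ^ 2) / σX := by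
    have h1 : 1 + φX ^ 2 = (VX + (mX - a) ^ 2) / σX ^ 2 := by
      rw [hφX]; field_simp; linarith [hσX2]
    rw [h1, Real.sqrt_div (by positivity), Real.sqrt_sq hσXpos.le]
  have hsY : Real.sqrt (1 + φY ^ 2) = Real.sqrt (VY + (mY - b) ^ 2) / σY := by
    have h1 : 1 + φY ^ 2 = (VY + (mY - b) ^ 2) / σY ^ 2 := by
      rw [hφY]; field_simp; linarith [hσY2]
    rw [h1, Real.sqrt_div (by positivity), Real.sqrt_sq hσYpos.le]
  have hρφ : ρ + φX * φY = (C + (mX - a) * (mY - b)) / (σX * σY) := by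
    rw [hρ, hφX, hφY]; field_simp
  have hsqXpos : 0 < Real.sqrt (VX + (mX - a) ^ 2) :=
    Real.sqrt_pos.2 (by positivity)
  have hsqYpos : 0 < Real.sqrt (VY + (mY - b) ^ 2) :=
    Real.sqrt_pos.2 (by positivity)
  rw [hnum, hdX, hdY, hsX, hsY, hρφ]
  field_simp
end

section
/- Let ρ ∈ ℝ with −1 ≤ ρ ≤ 1, and define h(t,s) = (ρ + t·s)/(√(1+t²)·√(1+s²)) for t, s ∈ ℝ. Then (0,0) is a saddle point of h in the following sense: h(0,0) = ρ, h(t,t) ≥ ρ for every real t, and h(t,−t) ≤ ρ for every real t. -/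
/-- For `−1 ≤ ρ ≤ 1`, the reduced local dependence function
`h(t,s) = (ρ + t·s)/(√(1+t²)·√(1+s²))` has a saddle point at `(0,0)`:
`h(0,0) = ρ`, `h(t,t) ≥ ρ` for every real `t`, and `h(t,−t) ≤ ρ` for every real `t`. -/
theorem reduced_localDependence_saddle_point (ρ : ℝ) (h1 : -1 ≤ ρ) (h2 : ρ ≤ 1) :
    (ρ + (0 : ℝ) * 0) / (Real.sqrt (1 + (0 : ℝ) ^ 2) * Real.sqrt (1 + (0 : ℝ) ^ 2)) = ρ ∧
    (∀ t : ℝ, ρ ≤ (ρ + t * t) / (Real.sqrt (1 + t ^ 2) * Real.sqrt (1 + t ^ 2))) ∧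
    (∀ t : ℝ, (ρ + t * (-t)) / (Real.sqrt (1 + t ^ 2) * Real.sqrt (1 + (-t) ^ 2)) ≤ ρ) := by
  have key : ∀ t : ℝ, Real.sqrt (1 + t ^ 2) * Real.sqrt (1 + t ^ 2) = 1 + t ^ 2 := by
    intro t
    exact Real.mul_self_sqrt (by positivity)
  refine ⟨by rw [key]; norm_num, ?_, ?_⟩
  · intro t
    rw [key]
    rw [le_div_iff₀ (by positivity)]
    nlinarith [sq_nonneg t]
  · intro t
    have : (-t) ^ 2 = t ^ 2 := by ring
    rw [this, key]
    rw [div_le_iff₀ (by positivity)]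
    nlinarith [sq_nonneg t]
end

section
/- Let X, Y, Z be real-valued random variables on a probability space such that all products of at most three of X, Y, Z are integrable, and suppose σ_X² = Var(X) > 0, σ_Y² = Var(Y) > 0, σ_Z² = Var(Z) > 0. Let a, b, c be real constants and set φ_X = (E[X]−a)/σ_X, φ_Y = (E[Y]−b)/σ_Y, φ_Z = (E[Z]−c)/σ_Z, ρ_{XYZ} = E[(X−E[X])(Y−E[Y])(Z−E[Z])]/(σ_X σ_Y σ_Z), and ρ_{UV} = Cov(U,V)/(σ_U σ_V) for each pair. Then E[(X−a)(Y−b)(Z−c)] / √(E[(X−a)²]·E[(Y−b)²]·E[(Z−c)²]) = (ρ_{XYZ} + ρ_{XY}·φ_Z + ρ_{YZ}·φ_X + ρ_{XZ}·φ_Y + φ_X·φ_Y·φ_Z) / (√(1+φ_X²)·√(1+φ_Y²)·√(1+φ_Z²)). -/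
open MeasureTheory

section helpers
variable {Ω : Type*} [MeasurableSpace Ω] (μ : Measure Ω) [IsProbabilityMeasure μ]

lemma sq_int (X : Ω → ℝ) (hX : Integrable X μ)
    (hXX : Integrable (fun ω => X ω * X ω) μ) (a : ℝ) :
    ∫ ω, (X ω - a) ^ 2 ∂μ =
      (∫ ω, X ω * X ω ∂μ) - 2 * a * (∫ ω, X ω ∂μ) + a ^ 2 := by
  have h : (fun ω => (X ω - a) ^ 2)
      = fun ω => (X ω * X ω - 2 * a * X ω) + a ^ 2 := by
    ext ω; ring
  have i1 : Integrable (fun ω => X ω * X ω - 2 * a * X ω) μ := hXX.sub (hX.const_mul _)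
  rw [h, integral_add i1 (integrable_const _),
    integral_sub hXX (hX.const_mul _), integral_const_mul, integral_const,
    probReal_univ]
  simp

lemma pair_int (X Y : Ω → ℝ) (hX : Integrable X μ) (hY : Integrable Y μ)
    (hXY : Integrable (fun ω => X ω * Y ω) μ) (a b : ℝ) :
    ∫ ω, (X ω - a) * (Y ω - b) ∂μ =
      (∫ ω, X ω * Y ω ∂μ) - b * (∫ ω, X ω ∂μ) - a * (∫ ω, Y ω ∂μ) + a * b := by
  have h : (fun ω => (X ω - a) * (Y ω - b))
      = fun ω => (X ω * Y ω - b * X ω - a * Y ω) + a * b := by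
    ext ω; ring
  have i1 : Integrable (fun ω => X ω * Y ω - b * X ω) μ := hXY.sub (hX.const_mul _)
  have i2 : Integrable (fun ω => X ω * Y ω - b * X ω - a * Y ω) μ := i1.sub (hY.const_mul _)
  rw [h, integral_add i2 (integrable_const _),
    integral_sub i1 (hY.const_mul _),
    integral_sub hXY (hX.const_mul _), integral_const_mul, integral_const_mul,
    integral_const, probReal_univ]
  simp

lemma triple_int (X Y Z : Ω → ℝ) (hX : Integrable X μ) (hY : Integrable Y μ)
    (hZ : Integrable Z μ)
    (hXY : Integrable (fun ω => X ω * Y ω) μ)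
    (hXZ : Integrable (fun ω => X ω * Z ω) μ)
    (hYZ : Integrable (fun ω => Y ω * Z ω) μ)
    (hXYZ : Integrable (fun ω => X ω * Y ω * Z ω) μ) (a b c : ℝ) :
    ∫ ω, (X ω - a) * (Y ω - b) * (Z ω - c) ∂μ =
      (∫ ω, X ω * Y ω * Z ω ∂μ) - c * (∫ ω, X ω * Y ω ∂μ)
        - b * (∫ ω, X ω * Z ω ∂μ) - a * (∫ ω, Y ω * Z ω ∂μ)
        + b * c * (∫ ω, X ω ∂μ) + a * c * (∫ ω, Y ω ∂μ) + a * b * (∫ ω, Z ω ∂μ)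
        - a * b * c := by
  have h : (fun ω => (X ω - a) * (Y ω - b) * (Z ω - c))
      = fun ω => ((X ω * Y ω * Z ω - c * (X ω * Y ω) - b * (X ω * Z ω)
          - a * (Y ω * Z ω) + b * c * X ω + a * c * Y ω + a * b * Z ω)
          - a * b * c) := by
    ext ω; ring
  have i1 : Integrable (fun ω => X ω * Y ω * Z ω - c * (X ω * Y ω)) μ :=
    hXYZ.sub (hXY.const_mul c)
  have i2 : Integrable (fun ω => X ω * Y ω * Z ω - c * (X ω * Y ω) - b * (X ω * Z ω)) μ :=
    i1.sub (hXZ.const_mul b)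
  have i3 : Integrable (fun ω => X ω * Y ω * Z ω - c * (X ω * Y ω) - b * (X ω * Z ω)
      - a * (Y ω * Z ω)) μ := i2.sub (hYZ.const_mul a)
  have i4 : Integrable (fun ω => X ω * Y ω * Z ω - c * (X ω * Y ω) - b * (X ω * Z ω)
      - a * (Y ω * Z ω) + b * c * X ω) μ := i3.add (hX.const_mul (b*c))
  have i5 : Integrable (fun ω => X ω * Y ω * Z ω - c * (X ω * Y ω) - b * (X ω * Z ω)
      - a * (Y ω * Z ω) + b * c * X ω + a * c * Y ω) μ := i4.add (hY.const_mul (a*c))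
  have i6 : Integrable (fun ω => X ω * Y ω * Z ω - c * (X ω * Y ω) - b * (X ω * Z ω)
      - a * (Y ω * Z ω) + b * c * X ω + a * c * Y ω + a * b * Z ω) μ :=
    i5.add (hZ.const_mul (a*b))
  rw [h, integral_sub i6 (integrable_const _), integral_add i5 (hZ.const_mul _),
    integral_add i4 (hY.const_mul _), integral_add i3 (hX.const_mul _),
    integral_sub i2 (hYZ.const_mul _), integral_sub i1 (hXZ.const_mul _),
    integral_sub hXYZ (hXY.const_mul _), integral_const_mul, integral_const_mul,
    integral_const_mul, integral_const_mul, integral_const_mul, integral_const_mul,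
    integral_const, probReal_univ]
  simp

end helpers

/-- Normalized representation of the three-variate total local dependence function:
`E[(X−a)(Y−b)(Z−c)] / √(E[(X−a)²]·E[(Y−b)²]·E[(Z−c)²])
 = (ρ_{XYZ} + ρ_{XY}φ_Z + ρ_{YZ}φ_X + ρ_{XZ}φ_Y + φ_X φ_Y φ_Z)
   /(√(1+φ_X²)·√(1+φ_Y²)·√(1+φ_Z²))`. -/
theorem trivariate_localDependence_normalized_form {Ω : Type*} [MeasurableSpace Ω]
    (μ : Measure Ω) [IsProbabilityMeasure μ] (X Y Z : Ω → ℝ)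
    (hX : Integrable X μ) (hY : Integrable Y μ) (hZ : Integrable Z μ)
    (hXY : Integrable (fun ω => X ω * Y ω) μ)
    (hXZ : Integrable (fun ω => X ω * Z ω) μ)
    (hYZ : Integrable (fun ω => Y ω * Z ω) μ)
    (hXYZ : Integrable (fun ω => X ω * Y ω * Z ω) μ)
    (hXX : Integrable (fun ω => X ω * X ω) μ)
    (hYY : Integrable (fun ω => Y ω * Y ω) μ)
    (hZZ : Integrable (fun ω => Z ω * Z ω) μ)
    (hVarX : 0 < varVal μ X) (hVarY : 0 < varVal μ Y) (hVarZ : 0 < varVal μ Z)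
    (a b c : ℝ) (σX σY σZ φX φY φZ ρXYZ ρXY ρXZ ρYZ : ℝ)
    (hσX : σX = Real.sqrt (varVal μ X)) (hσY : σY = Real.sqrt (varVal μ Y))
    (hσZ : σZ = Real.sqrt (varVal μ Z))
    (hφX : φX = (expVal μ X - a) / σX) (hφY : φY = (expVal μ Y - b) / σY)
    (hφZ : φZ = (expVal μ Z - c) / σZ)
    (hρXYZ : ρXYZ =
      (∫ ω, (X ω - expVal μ X) * (Y ω - expVal μ Y) * (Z ω - expVal μ Z) ∂μ) /
        (σX * σY * σZ))
    (hρXY : ρXY = covVal μ X Y / (σX * σY))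
    (hρXZ : ρXZ = covVal μ X Z / (σX * σZ))
    (hρYZ : ρYZ = covVal μ Y Z / (σY * σZ)) :
    (∫ ω, (X ω - a) * (Y ω - b) * (Z ω - c) ∂μ) /
        Real.sqrt ((∫ ω, (X ω - a) ^ 2 ∂μ) * (∫ ω, (Y ω - b) ^ 2 ∂μ) *
          (∫ ω, (Z ω - c) ^ 2 ∂μ)) =
      (ρXYZ + ρXY * φZ + ρYZ * φX + ρXZ * φY + φX * φY * φZ) /
        (Real.sqrt (1 + φX ^ 2) * Real.sqrt (1 + φY ^ 2) * Real.sqrt (1 + φZ ^ 2)) := by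
  -- positivity of σ's
  have hσX0 : 0 < σX := hσX ▸ Real.sqrt_pos.mpr hVarX
  have hσY0 : 0 < σY := hσY ▸ Real.sqrt_pos.mpr hVarY
  have hσZ0 : 0 < σZ := hσZ ▸ Real.sqrt_pos.mpr hVarZ
  have hσX2 : σX ^ 2 = varVal μ X := by rw [hσX, Real.sq_sqrt hVarX.le]
  have hσY2 : σY ^ 2 = varVal μ Y := by rw [hσY, Real.sq_sqrt hVarY.le]
  have hσZ2 : σZ ^ 2 = varVal μ Z := by rw [hσZ, Real.sq_sqrt hVarZ.le]
  -- raw moment abbreviations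
  set IX := ∫ ω, X ω ∂μ with hIX
  set IY := ∫ ω, Y ω ∂μ with hIY
  set IZ := ∫ ω, Z ω ∂μ with hIZ
  set IXX := ∫ ω, X ω * X ω ∂μ
  set IYY := ∫ ω, Y ω * Y ω ∂μ
  set IZZ := ∫ ω, Z ω * Z ω ∂μ
  set IXY := ∫ ω, X ω * Y ω ∂μ
  set IXZ := ∫ ω, X ω * Z ω ∂μ
  set IYZ := ∫ ω, Y ω * Z ω ∂μ
  set IXYZ := ∫ ω, X ω * Y ω * Z ω ∂μ
  have hEX : expVal μ X = IX := rfl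
  have hEY : expVal μ Y = IY := rfl
  have hEZ : expVal μ Z = IZ := rfl
  -- variance / covariance expansions
  have hVx : varVal μ X = IXX - IX ^ 2 := by
    show (∫ ω, (X ω - expVal μ X) ^ 2 ∂μ) = _
    rw [sq_int μ X hX hXX, hEX]; ring
  have hVy : varVal μ Y = IYY - IY ^ 2 := by
    show (∫ ω, (Y ω - expVal μ Y) ^ 2 ∂μ) = _
    rw [sq_int μ Y hY hYY, hEY]; ring
  have hVz : varVal μ Z = IZZ - IZ ^ 2 := by
    show (∫ ω, (Z ω - expVal μ Z) ^ 2 ∂μ) = _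
    rw [sq_int μ Z hZ hZZ, hEZ]; ring
  have hCxy : covVal μ X Y = IXY - IX * IY := by
    show (∫ ω, (X ω - expVal μ X) * (Y ω - expVal μ Y) ∂μ) = _
    rw [pair_int μ X Y hX hY hXY, hEX, hEY]; ring
  have hCxz : covVal μ X Z = IXZ - IX * IZ := by
    show (∫ ω, (X ω - expVal μ X) * (Z ω - expVal μ Z) ∂μ) = _
    rw [pair_int μ X Z hX hZ hXZ, hEX, hEZ]; ring
  have hCyz : covVal μ Y Z = IYZ - IY * IZ := by
    show (∫ ω, (Y ω - expVal μ Y) * (Z ω - expVal μ Z) ∂μ) = _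
    rw [pair_int μ Y Z hY hZ hYZ, hEY, hEZ]; ring
  have hT : (∫ ω, (X ω - expVal μ X) * (Y ω - expVal μ Y) * (Z ω - expVal μ Z) ∂μ)
      = IXYZ - IZ * IXY - IY * IXZ - IX * IYZ + 2 * IX * IY * IZ := by
    rw [triple_int μ X Y Z hX hY hZ hXY hXZ hYZ hXYZ, hEX, hEY, hEZ]; ring
  have hN : (∫ ω, (X ω - a) * (Y ω - b) * (Z ω - c) ∂μ)
      = IXYZ - c * IXY - b * IXZ - a * IYZ + b * c * IX + a * c * IY + a * b * IZ
        - a * b * c :=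
    triple_int μ X Y Z hX hY hZ hXY hXZ hYZ hXYZ a b c
  set N : ℝ := IXYZ - c * IXY - b * IXZ - a * IYZ + b * c * IX + a * c * IY + a * b * IZ
        - a * b * c with hNdef
  -- second moments about a, b, c
  have hSx : (∫ ω, (X ω - a) ^ 2 ∂μ) = σX ^ 2 * (1 + φX ^ 2) := by
    rw [sq_int μ X hX hXX, hφX, hEX]
    change IXX - 2 * a * IX + a ^ 2 = _
    field_simp
    rw [hσX2, hVx]; ring
  have hSy : (∫ ω, (Y ω - b) ^ 2 ∂μ) = σY ^ 2 * (1 + φY ^ 2) := by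
    rw [sq_int μ Y hY hYY, hφY, hEY]
    change IYY - 2 * b * IY + b ^ 2 = _
    field_simp
    rw [hσY2, hVy]; ring
  have hSz : (∫ ω, (Z ω - c) ^ 2 ∂μ) = σZ ^ 2 * (1 + φZ ^ 2) := by
    rw [sq_int μ Z hZ hZZ, hφZ, hEZ]
    change IZZ - 2 * c * IZ + c ^ 2 = _
    field_simp
    rw [hσZ2, hVz]; ring
  -- sqrt positivity
  have pX : (0:ℝ) < 1 + φX ^ 2 := by positivity
  have pY : (0:ℝ) < 1 + φY ^ 2 := by positivity
  have pZ : (0:ℝ) < 1 + φZ ^ 2 := by positivity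
  have sX : 0 < Real.sqrt (1 + φX ^ 2) := Real.sqrt_pos.mpr pX
  have sY : 0 < Real.sqrt (1 + φY ^ 2) := Real.sqrt_pos.mpr pY
  have sZ : 0 < Real.sqrt (1 + φZ ^ 2) := Real.sqrt_pos.mpr pZ
  -- denominator factorization
  have hden : Real.sqrt ((∫ ω, (X ω - a) ^ 2 ∂μ) * (∫ ω, (Y ω - b) ^ 2 ∂μ) *
      (∫ ω, (Z ω - c) ^ 2 ∂μ))
      = (σX * Real.sqrt (1 + φX ^ 2)) * (σY * Real.sqrt (1 + φY ^ 2)) *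
        (σZ * Real.sqrt (1 + φZ ^ 2)) := by
    rw [hSx, hSy, hSz,
      Real.sqrt_mul (by positivity) (σZ ^ 2 * (1 + φZ ^ 2)),
      Real.sqrt_mul (by positivity) (σY ^ 2 * (1 + φY ^ 2)),
      Real.sqrt_mul (sq_nonneg σX), Real.sqrt_mul (sq_nonneg σY),
      Real.sqrt_mul (sq_nonneg σZ),
      Real.sqrt_sq hσX0.le, Real.sqrt_sq hσY0.le, Real.sqrt_sq hσZ0.le]
  -- numerator identity
  have hnum : ρXYZ + ρXY * φZ + ρYZ * φX + ρXZ * φY + φX * φY * φZ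
      = N / (σX * σY * σZ) := by
    rw [hρXYZ, hρXY, hρXZ, hρYZ, hφX, hφY, hφZ, hT, hCxy, hCxz, hCyz, hEX, hEY, hEZ,
      hNdef]
    field_simp
    ring
  rw [hN, hden, hnum, div_div]
  congr 1
  ring
end

section
/- Let X, Y, Z be pairwise independent real-valued random variables on a probability space (each of the pairs (X,Y), (X,Z), (Y,Z) is independent) such that all products of at most three of X, Y, Z are integrable, and suppose σ_X² = Var(X) > 0, σ_Y² = Var(Y) > 0, σ_Z² = Var(Z) > 0. Let a, b, c be real constants and set φ_X = (E[X]−a)/σ_X, φ_Y = (E[Y]−b)/σ_Y, φ_Z = (E[Z]−c)/σ_Z, and ρ_{XYZ} = E[(X−E[X])(Y−E[Y])(Z−E[Z])]/(σ_X σ_Y σ_Z). Then E[(X−a)(Y−b)(Z−c)] / √(E[(X−a)²]·E[(Y−b)²]·E[(Z−c)²]) = (ρ_{XYZ} + φ_X·φ_Y·φ_Z) / (√(1+φ_X²)·√(1+φ_Y²)·√(1+φ_Z²)). -/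
open MeasureTheory ProbabilityTheory

lemma expand3 {Ω : Type*} [MeasurableSpace Ω] (μ : Measure Ω) [IsProbabilityMeasure μ]
    (X Y Z : Ω → ℝ)
    (hX : Integrable X μ) (hY : Integrable Y μ) (hZ : Integrable Z μ)
    (hXY : Integrable (fun ω => X ω * Y ω) μ)
    (hXZ : Integrable (fun ω => X ω * Z ω) μ)
    (hYZ : Integrable (fun ω => Y ω * Z ω) μ)
    (hXYZ : Integrable (fun ω => X ω * Y ω * Z ω) μ)
    (a b c : ℝ) :
    ∫ ω, (X ω - a) * (Y ω - b) * (Z ω - c) ∂μ =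
      (∫ ω, X ω * Y ω * Z ω ∂μ) - c * (∫ ω, X ω * Y ω ∂μ) - b * (∫ ω, X ω * Z ω ∂μ)
        - a * (∫ ω, Y ω * Z ω ∂μ) + b * c * (∫ ω, X ω ∂μ) + a * c * (∫ ω, Y ω ∂μ)
        + a * b * (∫ ω, Z ω ∂μ) - a * b * c := by
  have I1 : Integrable (fun ω => X ω * Y ω * Z ω - c * (X ω * Y ω)) μ :=
    hXYZ.sub (hXY.const_mul c)
  have I2 : Integrable (fun ω => X ω * Y ω * Z ω - c * (X ω * Y ω) - b * (X ω * Z ω)) μ :=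
    I1.sub (hXZ.const_mul b)
  have I3 : Integrable (fun ω => X ω * Y ω * Z ω - c * (X ω * Y ω) - b * (X ω * Z ω)
      - a * (Y ω * Z ω)) μ := I2.sub (hYZ.const_mul a)
  have I4 : Integrable (fun ω => X ω * Y ω * Z ω - c * (X ω * Y ω) - b * (X ω * Z ω)
      - a * (Y ω * Z ω) + b * c * X ω) μ := I3.add (hX.const_mul (b * c))
  have I5 : Integrable (fun ω => X ω * Y ω * Z ω - c * (X ω * Y ω) - b * (X ω * Z ω)
      - a * (Y ω * Z ω) + b * c * X ω + a * c * Y ω) μ := I4.add (hY.const_mul (a * c))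
  have I6 : Integrable (fun ω => X ω * Y ω * Z ω - c * (X ω * Y ω) - b * (X ω * Z ω)
      - a * (Y ω * Z ω) + b * c * X ω + a * c * Y ω + a * b * Z ω) μ :=
    I5.add (hZ.const_mul (a * b))
  have key : (fun ω => (X ω - a) * (Y ω - b) * (Z ω - c)) =
      fun ω => X ω * Y ω * Z ω - c * (X ω * Y ω) - b * (X ω * Z ω)
        - a * (Y ω * Z ω) + b * c * X ω + a * c * Y ω + a * b * Z ω - a * b * c := by
    funext ω; ring
  rw [show (∫ ω, (X ω - a) * (Y ω - b) * (Z ω - c) ∂μ) =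
      ∫ ω, (X ω * Y ω * Z ω - c * (X ω * Y ω) - b * (X ω * Z ω)
        - a * (Y ω * Z ω) + b * c * X ω + a * c * Y ω + a * b * Z ω - a * b * c) ∂μ
      from by rw [← key]]
  rw [integral_sub I6 (integrable_const _), integral_add I5 (hZ.const_mul _),
    integral_add I4 (hY.const_mul _), integral_add I3 (hX.const_mul _),
    integral_sub I2 (hYZ.const_mul _), integral_sub I1 (hXZ.const_mul _),
    integral_sub hXYZ (hXY.const_mul _), integral_const_mul, integral_const_mul,
    integral_const_mul, integral_const_mul, integral_const_mul, integral_const_mul,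
    integral_const]
  simp

lemma expand2 {Ω : Type*} [MeasurableSpace Ω] (μ : Measure Ω) [IsProbabilityMeasure μ]
    (X : Ω → ℝ) (hX : Integrable X μ) (hXX : Integrable (fun ω => X ω * X ω) μ) (a : ℝ) :
    ∫ ω, (X ω - a) ^ 2 ∂μ =
      (∫ ω, X ω * X ω ∂μ) - 2 * a * (∫ ω, X ω ∂μ) + a ^ 2 := by
  have I1 : Integrable (fun ω => X ω * X ω - 2 * a * X ω) μ := hXX.sub (hX.const_mul _)
  have key : (fun ω => (X ω - a) ^ 2) =
      fun ω => X ω * X ω - 2 * a * X ω + a ^ 2 := by funext ω; ring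
  rw [show (∫ ω, (X ω - a) ^ 2 ∂μ) =
      ∫ ω, (X ω * X ω - 2 * a * X ω + a ^ 2) ∂μ from by rw [← key]]
  rw [integral_add I1 (integrable_const _), integral_sub hXX (hX.const_mul _),
    integral_const_mul, integral_const]
  simp

/-- Under pairwise independence of `X`, `Y`, `Z` the pairwise correlation terms vanish
from the three-variate local dependence function:
`E[(X−a)(Y−b)(Z−c)] / √(E[(X−a)²]·E[(Y−b)²]·E[(Z−c)²])
 = (ρ_{XYZ} + φ_X φ_Y φ_Z)/(√(1+φ_X²)·√(1+φ_Y²)·√(1+φ_Z²))`. -/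
theorem trivariate_localDependence_of_pairwise_indep {Ω : Type*} [MeasurableSpace Ω]
    (μ : Measure Ω) [IsProbabilityMeasure μ] (X Y Z : Ω → ℝ)
    (hX : Integrable X μ) (hY : Integrable Y μ) (hZ : Integrable Z μ)
    (hXY : Integrable (fun ω => X ω * Y ω) μ)
    (hXZ : Integrable (fun ω => X ω * Z ω) μ)
    (hYZ : Integrable (fun ω => Y ω * Z ω) μ)
    (hXYZ : Integrable (fun ω => X ω * Y ω * Z ω) μ)
    (hXX : Integrable (fun ω => X ω * X ω) μ)
    (hYY : Integrable (fun ω => Y ω * Y ω) μ)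
    (hZZ : Integrable (fun ω => Z ω * Z ω) μ)
    (hIndXY : IndepFun X Y μ) (hIndXZ : IndepFun X Z μ) (hIndYZ : IndepFun Y Z μ)
    (hVarX : 0 < varVal μ X) (hVarY : 0 < varVal μ Y) (hVarZ : 0 < varVal μ Z)
    (a b c : ℝ) (σX σY σZ φX φY φZ ρXYZ : ℝ)
    (hσX : σX = Real.sqrt (varVal μ X)) (hσY : σY = Real.sqrt (varVal μ Y))
    (hσZ : σZ = Real.sqrt (varVal μ Z))
    (hφX : φX = (expVal μ X - a) / σX) (hφY : φY = (expVal μ Y - b) / σY)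
    (hφZ : φZ = (expVal μ Z - c) / σZ)
    (hρXYZ : ρXYZ =
      (∫ ω, (X ω - expVal μ X) * (Y ω - expVal μ Y) * (Z ω - expVal μ Z) ∂μ) /
        (σX * σY * σZ)) :
    (∫ ω, (X ω - a) * (Y ω - b) * (Z ω - c) ∂μ) /
        Real.sqrt ((∫ ω, (X ω - a) ^ 2 ∂μ) * (∫ ω, (Y ω - b) ^ 2 ∂μ) *
          (∫ ω, (Z ω - c) ^ 2 ∂μ)) =
      (ρXYZ + φX * φY * φZ) /
        (Real.sqrt (1 + φX ^ 2) * Real.sqrt (1 + φY ^ 2) * Real.sqrt (1 + φZ ^ 2)) := by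
  set mX := expVal μ X with hmX
  set mY := expVal μ Y with hmY
  set mZ := expVal μ Z with hmZ
  have hσXpos : 0 < σX := hσX ▸ Real.sqrt_pos.2 hVarX
  have hσYpos : 0 < σY := hσY ▸ Real.sqrt_pos.2 hVarY
  have hσZpos : 0 < σZ := hσZ ▸ Real.sqrt_pos.2 hVarZ
  have hσX2 : σX ^ 2 = varVal μ X := by rw [hσX, Real.sq_sqrt hVarX.le]
  have hσY2 : σY ^ 2 = varVal μ Y := by rw [hσY, Real.sq_sqrt hVarY.le]
  have hσZ2 : σZ ^ 2 = varVal μ Z := by rw [hσZ, Real.sq_sqrt hVarZ.le]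
  -- independence
  have hmulXY : (∫ ω, X ω * Y ω ∂μ) = mX * mY := hIndXY.integral_fun_mul_eq_mul_integral hX.aestronglyMeasurable hY.aestronglyMeasurable
  have hmulXZ : (∫ ω, X ω * Z ω ∂μ) = mX * mZ := hIndXZ.integral_fun_mul_eq_mul_integral hX.aestronglyMeasurable hZ.aestronglyMeasurable
  have hmulYZ : (∫ ω, Y ω * Z ω ∂μ) = mY * mZ := hIndYZ.integral_fun_mul_eq_mul_integral hY.aestronglyMeasurable hZ.aestronglyMeasurable
  have hiX : (∫ ω, X ω ∂μ) = mX := rfl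
  have hiY : (∫ ω, Y ω ∂μ) = mY := rfl
  have hiZ : (∫ ω, Z ω ∂μ) = mZ := rfl
  -- second moments via variance
  have hVX : varVal μ X = (∫ ω, X ω * X ω ∂μ) - mX ^ 2 := by
    rw [varVal, expand2 μ X hX hXX, hiX]; ring
  have hVY : varVal μ Y = (∫ ω, Y ω * Y ω ∂μ) - mY ^ 2 := by
    rw [varVal, expand2 μ Y hY hYY, hiY]; ring
  have hVZ : varVal μ Z = (∫ ω, Z ω * Z ω ∂μ) - mZ ^ 2 := by
    rw [varVal, expand2 μ Z hZ hZZ, hiZ]; ring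
  have hx2 : (∫ ω, X ω * X ω ∂μ) = σX ^ 2 + mX ^ 2 := by rw [hσX2, hVX]; ring
  have hy2 : (∫ ω, Y ω * Y ω ∂μ) = σY ^ 2 + mY ^ 2 := by rw [hσY2, hVY]; ring
  have hz2 : (∫ ω, Z ω * Z ω ∂μ) = σZ ^ 2 + mZ ^ 2 := by rw [hσZ2, hVZ]; ring
  -- the three quadratic integrals
  have hQX : (∫ ω, (X ω - a) ^ 2 ∂μ) = σX ^ 2 * (1 + φX ^ 2) := by
    rw [expand2 μ X hX hXX, hx2, hiX, hφX]
    field_simp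
    ring
  have hQY : (∫ ω, (Y ω - b) ^ 2 ∂μ) = σY ^ 2 * (1 + φY ^ 2) := by
    rw [expand2 μ Y hY hYY, hy2, hiY, hφY]
    field_simp
    ring
  have hQZ : (∫ ω, (Z ω - c) ^ 2 ∂μ) = σZ ^ 2 * (1 + φZ ^ 2) := by
    rw [expand2 μ Z hZ hZZ, hz2, hiZ, hφZ]
    field_simp
    ring
  -- triple centered integral
  have hT : (∫ ω, (X ω - mX) * (Y ω - mY) * (Z ω - mZ) ∂μ) =
      (∫ ω, X ω * Y ω * Z ω ∂μ) - mX * mY * mZ := by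
    rw [expand3 μ X Y Z hX hY hZ hXY hXZ hYZ hXYZ, hmulXY, hmulXZ, hmulYZ, hiX, hiY, hiZ]
    ring
  have hρ : ρXYZ * (σX * σY * σZ) = (∫ ω, X ω * Y ω * Z ω ∂μ) - mX * mY * mZ := by
    rw [hρXYZ, div_mul_cancel₀, hT]
    positivity
  -- numerator
  have hN : (∫ ω, (X ω - a) * (Y ω - b) * (Z ω - c) ∂μ) =
      (σX * σY * σZ) * (ρXYZ + φX * φY * φZ) := by
    rw [expand3 μ X Y Z hX hY hZ hXY hXZ hYZ hXYZ, hmulXY, hmulXZ, hmulYZ, hiX, hiY, hiZ,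
      hφX, hφY, hφZ]
    have : (σX * σY * σZ) * (ρXYZ + (mX - a) / σX * ((mY - b) / σY) * ((mZ - c) / σZ)) =
        ρXYZ * (σX * σY * σZ) + (mX - a) * (mY - b) * (mZ - c) := by
      field_simp
    rw [this, hρ]; ring
  -- denominator
  have hD : Real.sqrt ((∫ ω, (X ω - a) ^ 2 ∂μ) * (∫ ω, (Y ω - b) ^ 2 ∂μ) *
      (∫ ω, (Z ω - c) ^ 2 ∂μ)) =
      (σX * σY * σZ) * (Real.sqrt (1 + φX ^ 2) * Real.sqrt (1 + φY ^ 2)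
        * Real.sqrt (1 + φZ ^ 2)) := by
    rw [hQX, hQY, hQZ]
    rw [Real.sqrt_mul (by positivity), Real.sqrt_mul (by positivity),
      Real.sqrt_mul (sq_nonneg σX), Real.sqrt_mul (sq_nonneg σY),
      Real.sqrt_mul (sq_nonneg σZ), Real.sqrt_sq hσXpos.le, Real.sqrt_sq hσYpos.le,
      Real.sqrt_sq hσZpos.le]
    ring
  rw [hN, hD, mul_div_mul_left _ _ (by positivity : σX * σY * σZ ≠ 0)]
end

section
/- Let n ≥ 2 and let X₁, …, Xₙ be real-valued random variables on a probability space such that every product of a subfamily of the Xᵢ is integrable. Suppose every proper subfamily is mutually independent, i.e. for every subset S ⊊ {1,…,n} with 2 ≤ |S| ≤ n−1, the random variables (Xᵢ)_{i∈S} are mutually independent. Then for all real constants a₁, …, aₙ: E[∏_{i=1}^{n}(Xᵢ−aᵢ)] = E[∏_{i=1}^{n}(Xᵢ−E[Xᵢ])] + ∏_{i=1}^{n}(E[Xᵢ]−aᵢ). Consequently, if additionally Var(Xᵢ) = σᵢ² > 0 for all i and φᵢ = (E[Xᵢ]−aᵢ)/σᵢ, ρ = E[∏_{i=1}^{n}(Xᵢ−E[Xᵢ])]/∏σᵢ,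 then E[∏(Xᵢ−aᵢ)]/∏√(E[(Xᵢ−aᵢ)²]) = (ρ + ∏φᵢ)/∏√(1+φᵢ²). -/
open MeasureTheory ProbabilityTheory

lemma my_iIndepFun_ae_eq {ι Ω : Type*} [MeasurableSpace Ω] {μ : Measure Ω}
    {f g : ι → Ω → ℝ} (h : iIndepFun (m := fun _ => (inferInstance : MeasurableSpace ℝ)) f μ)
    (hfg : ∀ i, f i =ᵐ[μ] g i) :
    iIndepFun (m := fun _ => (inferInstance : MeasurableSpace ℝ)) g μ := by
  rw [iIndepFun_iff] at h ⊢
  intro s f' hf'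
  classical
  set T : ι → Set ℝ := fun i =>
    if hi : i ∈ s then (MeasurableSpace.measurableSet_comap.mp (hf' i hi)).choose
    else Set.univ with hT
  have hTmeas : ∀ i ∈ s, MeasurableSet (T i) ∧ g i ⁻¹' (T i) = f' i := by
    intro i hi
    simpa [hT, dif_pos hi] using
      (MeasurableSpace.measurableSet_comap.mp (hf' i hi)).choose_spec
  have hae : ∀ i ∈ s, (f i ⁻¹' (T i) : Set Ω) =ᵐ[μ] f' i := by
    intro i hi
    rw [← (hTmeas i hi).2]
    filter_upwards [hfg i] with ω hω
    show (f i ω ∈ T i) = (g i ω ∈ T i)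
    rw [hω]
  have h1 := h s (f' := fun i => f i ⁻¹' (T i))
    (fun i hi => MeasurableSpace.measurableSet_comap.mpr ⟨T i, (hTmeas i hi).1, rfl⟩)
  have h2 : μ (⋂ i ∈ s, f i ⁻¹' (T i)) = μ (⋂ i ∈ s, f' i) := by
    apply measure_congr
    have hall : ∀ᵐ ω ∂μ, ∀ i ∈ s, ((f i ⁻¹' (T i)) ω = (f' i) ω) := by
      rw [Filter.eventually_all_finset]
      intro i hi
      exact hae i hi
    filter_upwards [hall] with ω hω
    show (ω ∈ ⋂ i ∈ s, f i ⁻¹' (T i)) = (ω ∈ ⋂ i ∈ s, f' i)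
    apply propext
    simp only [Set.mem_iInter]
    constructor <;> intro hh i hi
    · exact (iff_of_eq (hω i hi)).mp (hh i hi)
    · exact (iff_of_eq (hω i hi)).mpr (hh i hi)
  have h3 : ∀ i ∈ s, μ (f i ⁻¹' (T i)) = μ (f' i) := fun i hi => measure_congr (hae i hi)
  rw [← h2, h1]
  exact Finset.prod_congr rfl h3

lemma my_integral_prod {ι Ω : Type*} [MeasurableSpace Ω] {μ : Measure Ω}
    [IsProbabilityMeasure μ] {g : ι → Ω → ℝ}
    (h : iIndepFun (m := fun _ => (inferInstance : MeasurableSpace ℝ)) g μ)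
    (hm : ∀ i, Measurable (g i)) (hint : ∀ i, Integrable (g i) μ) (s : Finset ι) :
    Integrable (fun ω => ∏ i ∈ s, g i ω) μ ∧
      ∫ ω, ∏ i ∈ s, g i ω ∂μ = ∏ i ∈ s, ∫ ω, g i ω ∂μ := by
  classical
  induction s using Finset.cons_induction with
  | empty => simp [integrable_const]
  | cons i s hi ih =>
    have hindep : IndepFun (∏ j ∈ s, g j) (g i) μ :=
      h.indepFun_finset_prod_of_notMem hm hi
    have hps : (∏ j ∈ s, g j) = fun ω => ∏ j ∈ s, g j ω := by
      funext ω; simp [Finset.prod_apply]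
    rw [hps] at hindep
    have hintprod : Integrable (fun ω => (∏ j ∈ s, g j ω) * g i ω) μ :=
      hindep.integrable_mul ih.1 (hint i)
    constructor
    · simp only [Finset.prod_cons]
      exact hintprod.congr (by filter_upwards with ω using by ring)
    · simp only [Finset.prod_cons]
      have := IndepFun.integral_fun_mul_eq_mul_integral hindep ih.1.1 (hint i).1
      calc ∫ ω, g i ω * ∏ j ∈ s, g j ω ∂μ
          = ∫ ω, (∏ j ∈ s, g j ω) * g i ω ∂μ := by
            congr 1; funext ω; ring
        _ = (∫ ω, ∏ j ∈ s, g j ω ∂μ) * ∫ ω, g i ω ∂μ := this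
        _ = (∫ ω, g i ω ∂μ) * ∏ j ∈ s, ∫ ω, g j ω ∂μ := by rw [ih.2]; ring

/-- If every proper subfamily of size between `2` and `n−1` of `X₁, …, Xₙ` is mutually
independent, then `E[∏ᵢ(Xᵢ−aᵢ)] = E[∏ᵢ(Xᵢ−E[Xᵢ])] + ∏ᵢ(E[Xᵢ]−aᵢ)`; consequently, with
positive variances, `φᵢ = (E[Xᵢ]−aᵢ)/σᵢ` and `ρ = E[∏ᵢ(Xᵢ−E[Xᵢ])]/∏σᵢ`, one has
`E[∏(Xᵢ−aᵢ)]/∏√E[(Xᵢ−aᵢ)²] = (ρ + ∏φᵢ)/∏√(1+φᵢ²)`. -/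
theorem multivariate_localDependence_of_proper_subfamily_indep {Ω : Type*}
    [MeasurableSpace Ω] (μ : Measure Ω) [IsProbabilityMeasure μ]
    (n : ℕ) (hn : 2 ≤ n) (X : Fin n → Ω → ℝ)
    (hInt : ∀ m : Multiset (Fin n), m.card ≤ n →
      Integrable (fun ω => (m.map (fun i => X i ω)).prod) μ)
    (hInd : ∀ S : Finset (Fin n), 2 ≤ S.card → S.card ≤ n - 1 →
      iIndepFun (m := fun _ : S => (inferInstance : MeasurableSpace ℝ))
        (fun i : S => X i) μ) :
    (∀ a : Fin n → ℝ,
      ∫ ω, ∏ i, (X i ω - a i) ∂μ =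
        (∫ ω, ∏ i, (X i ω - expVal μ (X i)) ∂μ) + ∏ i, (expVal μ (X i) - a i)) ∧
    (∀ a : Fin n → ℝ, (∀ i, 0 < varVal μ (X i)) →
      (∫ ω, ∏ i, (X i ω - a i) ∂μ) /
          ∏ i, Real.sqrt (∫ ω, (X i ω - a i) ^ 2 ∂μ) =
        ((∫ ω, ∏ i, (X i ω - expVal μ (X i)) ∂μ) /
            (∏ i, Real.sqrt (varVal μ (X i))) +
          ∏ i, ((expVal μ (X i) - a i) / Real.sqrt (varVal μ (X i)))) /
          ∏ i, Real.sqrt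
            (1 + ((expVal μ (X i) - a i) / Real.sqrt (varVal μ (X i))) ^ 2)) := by
  classical
  set m : Fin n → ℝ := fun i => expVal μ (X i) with hm_def
  -- basic integrability facts
  have hXint : ∀ i, Integrable (X i) μ := by
    intro i
    have := hInt {i} (by simpa using Nat.one_le_of_lt hn)
    simpa using this
  have hXsq : ∀ i, Integrable (fun ω => X i ω * X i ω) μ := by
    intro i
    have := hInt {i, i} (by simpa using hn)
    simpa using this
  have hprodint : ∀ t : Finset (Fin n), Integrable (fun ω => ∏ i ∈ t, X i ω) μ := by
    intro t
    have hc : (t.val).card ≤ n := by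
      simpa using t.card_le_univ.trans_eq (by simp)
    exact hInt t.val hc
  have hshiftint : ∀ (c : Fin n → ℝ) (t : Finset (Fin n)),
      Integrable (fun ω => ∏ i ∈ t, (X i ω - c i)) μ := by
    intro c t
    have hexp : (fun ω => ∏ i ∈ t, (X i ω - c i)) =
        fun ω => ∑ u ∈ t.powerset, (∏ i ∈ u, X i ω) * ∏ i ∈ t \ u, (-c i) := by
      funext ω
      rw [show (∏ i ∈ t, (X i ω - c i)) = ∏ i ∈ t, (X i ω + (-c i)) by
        simp [sub_eq_add_neg]]
      exact Finset.prod_add _ _ _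
    rw [hexp]
    exact integrable_finset_sum _ fun u _ => (hprodint u).mul_const _
  -- measurable modifications
  set X' : Fin n → Ω → ℝ := fun i => (hXint i).1.mk (X i) with hX'_def
  have hX'm : ∀ i, Measurable (X' i) := fun i =>
    ((hXint i).1.stronglyMeasurable_mk).measurable
  have hX'ae : ∀ i, X i =ᵐ[μ] X' i := fun i => (hXint i).1.ae_eq_mk
  have haeall : ∀ᵐ ω ∂μ, ∀ i, X i ω = X' i ω := ae_all_iff.mpr hX'ae
  -- vanishing of intermediate terms
  have hzero : ∀ s : Finset (Fin n), s.Nonempty → s.card ≤ n - 1 →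
      ∫ ω, ∏ i ∈ s, (X i ω - m i) ∂μ = 0 := by
    intro s hne hle
    rcases eq_or_lt_of_le (Finset.one_le_card.mpr hne) with h1 | h2
    · -- singleton
      obtain ⟨j, rfl⟩ := Finset.card_eq_one.mp h1.symm
      simp only [Finset.prod_singleton]
      rw [integral_sub (hXint j) (integrable_const _), integral_const]
      simp [hm_def, expVal]
    · -- card ≥ 2 : use independence
      have hind := hInd s h2 hle
      have hind' : iIndepFun (m := fun _ : s => (inferInstance : MeasurableSpace ℝ))
          (fun i : s => X' i) μ :=
        my_iIndepFun_ae_eq hind (fun i => hX'ae i)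
      have hind2 := hind'.comp (fun i : s => fun x : ℝ => x - m i)
        (fun i => measurable_id.sub_const _)
      have hint2 : ∀ i : s, Integrable (fun ω => X' (i : Fin n) ω - m i) μ := fun i =>
        ((hXint i).congr (hX'ae i)).sub (integrable_const _)
      have key := my_integral_prod hind2 (fun i => (hX'm i).sub_const _) hint2 Finset.univ
      obtain ⟨j, hj⟩ := hne
      calc ∫ ω, ∏ i ∈ s, (X i ω - m i) ∂μ
          = ∫ ω, ∏ i : s, (X' (i : Fin n) ω - m i) ∂μ := by
            refine integral_congr_ae ?_
            filter_upwards [haeall] with ω hω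
            rw [← Finset.prod_coe_sort s (fun i => X i ω - m i)]
            exact Finset.prod_congr rfl fun i _ => by rw [hω]
        _ = ∏ i : s, ∫ ω, (X' (i : Fin n) ω - m i) ∂μ := key.2
        _ = 0 := by
            refine Finset.prod_eq_zero (Finset.mem_univ (⟨j, hj⟩ : s)) ?_
            rw [integral_sub ((hXint j).congr (hX'ae j)) (integrable_const _),
              integral_const, integral_congr_ae (hX'ae j).symm]
            simp [hm_def, expVal]
  -- Part 1
  have part1 : ∀ a : Fin n → ℝ,
      ∫ ω, ∏ i, (X i ω - a i) ∂μ =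
        (∫ ω, ∏ i, (X i ω - m i) ∂μ) + ∏ i, (m i - a i) := by
    intro a
    have hexp : (fun ω => ∏ i, (X i ω - a i)) =
        fun ω => ∑ t ∈ (Finset.univ : Finset (Fin n)).powerset,
          (∏ i ∈ t, (X i ω - m i)) * ∏ i ∈ Finset.univ \ t, (m i - a i) := by
      funext ω
      rw [show (∏ i, (X i ω - a i)) = ∏ i, ((X i ω - m i) + (m i - a i)) by
        exact Finset.prod_congr rfl fun i _ => by ring]
      exact Finset.prod_add _ _ _
    rw [hexp, integral_finset_sum _ fun t _ => (hshiftint m t).mul_const _]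
    have hterm : ∀ t : Finset (Fin n),
        ∫ ω, (∏ i ∈ t, (X i ω - m i)) * ∏ i ∈ Finset.univ \ t, (m i - a i) ∂μ =
          (∫ ω, ∏ i ∈ t, (X i ω - m i) ∂μ) * ∏ i ∈ Finset.univ \ t, (m i - a i) :=
      fun t => integral_mul_const _ _
    have : Nonempty (Fin n) := ⟨⟨0, by omega⟩⟩
    have hne : (∅ : Finset (Fin n)) ≠ Finset.univ :=
      (Finset.univ_nonempty.ne_empty).symm
    have hsub : ({Finset.univ, ∅} : Finset (Finset (Fin n))) ⊆
        (Finset.univ : Finset (Fin n)).powerset := by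
      intro t ht
      simp only [Finset.mem_insert, Finset.mem_singleton] at ht
      rcases ht with rfl | rfl <;> simp
    rw [← Finset.sum_subset hsub]
    · rw [Finset.sum_pair (Ne.symm hne)]
      rw [hterm, hterm]
      simp [integral_const]
    · intro t ht hts
      simp only [Finset.mem_insert, Finset.mem_singleton] at hts
      push_neg at hts
      obtain ⟨htu, hte⟩ := hts
      have htne : t.Nonempty := hte
      have htcard : t.card ≤ n - 1 := by
        have : t.card < n := by
          have h1 : t ⊂ Finset.univ := Finset.ssubset_univ_iff.mpr htu
          have := Finset.card_lt_card h1
          simpa using this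
        omega
      rw [hterm, hzero t htne htcard, zero_mul]
  refine ⟨part1, ?_⟩
  -- Part 2
  intro a hvar
  have hsm : ∀ i (c : ℝ), ∫ ω, (X i ω - c) ^ 2 ∂μ =
      (∫ ω, X i ω * X i ω ∂μ) - 2 * c * m i + c ^ 2 := by
    intro i c
    have e : (fun ω => (X i ω - c) ^ 2) =
        fun ω => (X i ω * X i ω - 2 * c * X i ω) + c ^ 2 := by
      funext ω; ring
    have hInt2 : Integrable (fun ω => 2 * c * X i ω) μ := (hXint i).const_mul _
    have hInt1 : Integrable (fun ω => X i ω * X i ω - 2 * c * X i ω) μ :=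
      (hXsq i).sub hInt2
    rw [e, integral_add hInt1 (integrable_const _), integral_sub (hXsq i) hInt2,
      MeasureTheory.integral_const_mul, integral_const]
    simp [hm_def, expVal]
  have hvarid : ∀ i, varVal μ (X i) = (∫ ω, X i ω * X i ω ∂μ) - m i ^ 2 := by
    intro i
    rw [varVal]
    show ∫ ω, (X i ω - m i) ^ 2 ∂μ = _
    rw [hsm i (m i)]; ring
  have hsqa : ∀ i, ∫ ω, (X i ω - a i) ^ 2 ∂μ = varVal μ (X i) + (m i - a i) ^ 2 := by
    intro i
    rw [hsm i (a i), hvarid i]; ring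
  have hsqrt : ∀ i, Real.sqrt (∫ ω, (X i ω - a i) ^ 2 ∂μ) =
      Real.sqrt (varVal μ (X i)) *
        Real.sqrt (1 + ((m i - a i) / Real.sqrt (varVal μ (X i))) ^ 2) := by
    intro i
    have hv := hvar i
    have hs : Real.sqrt (varVal μ (X i)) ^ 2 = varVal μ (X i) := Real.sq_sqrt hv.le
    have hsne : Real.sqrt (varVal μ (X i)) ≠ 0 :=
      ne_of_gt (Real.sqrt_pos.mpr hv)
    have h1 : varVal μ (X i) + (m i - a i) ^ 2 =
        (Real.sqrt (varVal μ (X i)) * Real.sqrt (varVal μ (X i))) *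
          (1 + ((m i - a i) / Real.sqrt (varVal μ (X i))) ^ 2) := by
      rw [div_pow, ← pow_two, hs]
      field_simp
    rw [hsqa i, h1, Real.sqrt_mul (mul_self_nonneg _),
      Real.sqrt_mul_self (Real.sqrt_nonneg _)]
  rw [part1 a]
  rw [show (∏ i, Real.sqrt (∫ ω, (X i ω - a i) ^ 2 ∂μ)) =
      (∏ i, Real.sqrt (varVal μ (X i))) *
        ∏ i, Real.sqrt (1 + ((m i - a i) / Real.sqrt (varVal μ (X i))) ^ 2) by
    rw [← Finset.prod_mul_distrib]
    exact Finset.prod_congr rfl fun i _ => hsqrt i]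
  rw [show (∏ i, ((m i - a i) / Real.sqrt (varVal μ (X i)))) =
      (∏ i, (m i - a i)) / ∏ i, Real.sqrt (varVal μ (X i)) from
    Finset.prod_div_distrib _ _]
  rw [← add_div, div_div]
end
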